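/- Let H, K : ℝ^{2n} × ℝ → ℝ be continuously differentiable, and let F, G : ℝ^{2n} × ℝ → ℝ^{2n} be continuously differentiable maps such that: for each t, f_t := F(·,t) is a bijection of ℝ^{2n} with continuously differentiable inverse f_t⁻¹ and the Jacobian matrix D_z F(z,t) is symplectic for every z; ∂_t F(z,t) = J∇_z H(F(z,t), t) for all (z,t) (F is the flow of H); and ∂_t G(z,t) = J∇_z K(G(z,t), t) for all (z,t) (G is the flow of K). Define (H#K)(z,t) := H(z,t) + K(f_t⁻¹(z), t). Then the composed family h_t := f_t ∘ g_t (where g_t := G(·,t)) is the Hamiltonian flow of H#K, i.e. ∂_t [F(G(z,t), t)] = J∇_z (H#K)( F(G(z,t),t), t ) for all (z,t). -/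

import Mathlib

open Matrix
open scoped RealInnerProductSpace

noncomputable section

/-- Phase space ℝ^{2n}, with coordinates indexed by `Fin n ⊕ Fin n` (the `x` and `p` blocks). -/
abbrev Phase (n : ℕ) := EuclideanSpace ℝ (Fin n ⊕ Fin n)

/-- The standard symplectic matrix `J = [[0, Iₙ],[−Iₙ, 0]]`. -/
def Jmat (n : ℕ) : Matrix (Fin n ⊕ Fin n) (Fin n ⊕ Fin n) ℝ :=
  Matrix.fromBlocks 0 1 (-1) 0

/-- The linear map `z ↦ Jz` on phase space. -/
def Jv {n : ℕ} (v : Phase n) : Phase n := WithLp.toLp 2 ((Jmat n).mulVec v)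

/-- The Jacobian matrix of a map of phase space at a point. -/
def jacMat {n : ℕ} (f : Phase n → Phase n) (z : Phase n) :
    Matrix (Fin n ⊕ Fin n) (Fin n ⊕ Fin n) ℝ :=
  LinearMap.toMatrix (EuclideanSpace.basisFun _ ℝ).toBasis
    (EuclideanSpace.basisFun _ ℝ).toBasis (fderiv ℝ f z).toLinearMap

lemma mulVec_jacMat {n : ℕ} (f : Phase n → Phase n) (z v : Phase n) :
    jacMat f z *ᵥ v = fderiv ℝ f z v := by
  exact LinearMap.toMatrix_mulVec_repr
    (EuclideanSpace.basisFun (Fin n ⊕ Fin n) ℝ).toBasis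
    (EuclideanSpace.basisFun (Fin n ⊕ Fin n) ℝ).toBasis (fderiv ℝ f z).toLinearMap v

lemma inner_eq_dot {n : ℕ} (u v : Phase n) : ⟪u, v⟫ = u ⬝ᵥ v := by
  simp [PiLp.inner_apply, dotProduct, RCLike.inner_apply, mul_comm]

def toPhase {n : ℕ} (v : Fin n ⊕ Fin n → ℝ) : Phase n := WithLp.toLp 2 v

lemma Jv_add {n : ℕ} (a b : Phase n) : Jv (a + b) = Jv a + Jv b := by
  ext i
  simp [Jv, Matrix.mulVec, dotProduct, PiLp.add_apply, mul_add, Finset.sum_add_distrib]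

lemma add_dot {n : ℕ} (a b v : Phase n) : (a + b : Phase n) ⬝ᵥ v = a ⬝ᵥ v + b ⬝ᵥ v := by
  simp [dotProduct, PiLp.add_apply, add_mul, Finset.sum_add_distrib]

lemma Jmat_mul_Jmat {n : ℕ} : Jmat n * Jmat n = -1 := by
  simp [Jmat, Matrix.fromBlocks_multiply, Matrix.fromBlocks_neg, ← Matrix.fromBlocks_one]

lemma Jmat_transpose {n : ℕ} : (Jmat n)ᵀ = - Jmat n := by
  simp [Jmat, Matrix.fromBlocks_transpose, Matrix.fromBlocks_neg]

/-- **Composition of Hamiltonian flows.** If `(f_t)` is the flow of `H` (each `f_t` a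
canonical transformation with `C¹` inverse) and `(g_t)` is the flow of `K`, then
`(f_t ∘ g_t)` is the Hamiltonian flow of `(H#K)(z,t) = H(z,t) + K(f_t⁻¹(z), t)`. -/
theorem composition_of_hamiltonian_flows {n : ℕ}
    (H K : Phase n → ℝ → ℝ)
    (hH : ContDiff ℝ 1 (fun q : Phase n × ℝ => H q.1 q.2))
    (hK : ContDiff ℝ 1 (fun q : Phase n × ℝ => K q.1 q.2))
    (F G : Phase n → ℝ → Phase n)
    (hF : ContDiff ℝ 1 (fun q : Phase n × ℝ => F q.1 q.2))
    (hG : ContDiff ℝ 1 (fun q : Phase n × ℝ => G q.1 q.2))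
    (Finv : Phase n → ℝ → Phase n)
    (hFinv : ∀ t, ContDiff ℝ 1 (fun z => Finv z t))
    (hinv₁ : ∀ (z : Phase n) (t : ℝ), Finv (F z t) t = z)
    (hinv₂ : ∀ (z : Phase n) (t : ℝ), F (Finv z t) t = z)
    (hsymp : ∀ (z : Phase n) (t : ℝ),
      (jacMat (fun w => F w t) z)ᵀ * Jmat n * jacMat (fun w => F w t) z = Jmat n)
    (hflowF : ∀ (z : Phase n) (t : ℝ),
      HasDerivAt (fun s => F z s) (Jv (gradient (fun w => H w t) (F z t))) t)
    (hflowG : ∀ (z : Phase n) (t : ℝ),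
      HasDerivAt (fun s => G z s) (Jv (gradient (fun w => K w t) (G z t))) t)
    (HK : Phase n → ℝ → ℝ)
    (hHK : ∀ (z : Phase n) (t : ℝ), HK z t = H z t + K (Finv z t) t) :
    ∀ (z : Phase n) (t : ℝ),
      HasDerivAt (fun s => F (G z s) s)
        (Jv (gradient (fun w => HK w t) (F (G z t) t))) t := by
  intro z t
  set z₀ := G z t with hz₀
  set w₀ := F z₀ t with hw₀
  have hFinvw₀ : Finv w₀ t = z₀ := hinv₁ z₀ t
  -- differentiability of the pair maps
  have hΦd : ∀ p : Phase n × ℝ, DifferentiableAt ℝ (fun q : Phase n × ℝ => F q.1 q.2) p :=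
    fun p => (hF.differentiable one_ne_zero).differentiableAt
  set Φ : Phase n × ℝ → Phase n := fun q => F q.1 q.2 with hΦ
  set DΦ := fderiv ℝ Φ (z₀, t) with hDΦ
  -- partial derivative in z of F at z₀
  have hincl : HasFDerivAt (fun w : Phase n => (w, t))
      (ContinuousLinearMap.inl ℝ (Phase n) ℝ) z₀ := hasFDerivAt_prodMk_left z₀ t
  have hAz : HasFDerivAt (fun w => F w t)
      (DΦ.comp (ContinuousLinearMap.inl ℝ (Phase n) ℝ)) z₀ := by
    have := ((hΦd (z₀, t)).hasFDerivAt).comp z₀ hincl; exact this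
  have hA_eq : fderiv ℝ (fun w => F w t) z₀ = DΦ.comp (ContinuousLinearMap.inl ℝ (Phase n) ℝ) :=
    hAz.fderiv
  -- time partial of F at z₀ equals DΦ (0,1)
  have htime : HasDerivAt (fun s => F z₀ s) (DΦ ((0 : Phase n), (1 : ℝ))) t := by
    have hpair : HasDerivAt (fun s : ℝ => ((z₀ : Phase n), s)) ((0 : Phase n), (1 : ℝ)) t :=
      (hasDerivAt_const t z₀).prodMk (hasDerivAt_id t)
    exact ((hΦd (z₀, t)).hasFDerivAt).comp_hasDerivAt_of_eq t hpair rfl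
  have htime' : DΦ ((0 : Phase n), (1 : ℝ)) = Jv (gradient (fun w => H w t) w₀) :=
    htime.unique (hflowF z₀ t)
  -- the derivative of the composed curve
  set g' : Phase n := Jv (gradient (fun w => K w t) z₀) with hg'
  have hcurve : HasDerivAt (fun s => F (G z s) s) (DΦ (g', (1 : ℝ))) t := by
    have hpair : HasDerivAt (fun s : ℝ => (G z s, s)) (g', (1 : ℝ)) t :=
      (hflowG z t).prodMk (hasDerivAt_id t)
    exact ((hΦd (z₀, t)).hasFDerivAt).comp_hasDerivAt_of_eq t hpair rfl
  have hsplit : DΦ (g', (1 : ℝ)) =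
      (fderiv ℝ (fun w => F w t) z₀) g' + Jv (gradient (fun w => H w t) w₀) := by
    rw [hA_eq, ← htime']
    have : (g', (1 : ℝ)) = ((g', 0) : Phase n × ℝ) + ((0 : Phase n), (1 : ℝ)) := by
      simp
    rw [this, map_add]
    rfl
  -- matrices
  set A := jacMat (fun w => F w t) z₀ with hA
  set B := jacMat (fun w => Finv w t) w₀ with hB
  -- chain rule facts
  have hFd : DifferentiableAt ℝ (fun w => F w t) z₀ := hAz.differentiableAt
  have hFd' : DifferentiableAt ℝ (fun w => F w t) (Finv w₀ t) := by
    rw [hFinvw₀]; exact hFd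
  have hBd : DifferentiableAt ℝ (fun w => Finv w t) w₀ :=
    ((hFinv t).differentiable one_ne_zero).differentiableAt
  have hBA : B * A = 1 := by
    have hcomp : fderiv ℝ ((fun w => Finv w t) ∘ (fun w => F w t)) z₀ =
        (fderiv ℝ (fun w => Finv w t) w₀).comp (fderiv ℝ (fun w => F w t) z₀) :=
      fderiv_comp z₀ hBd hFd
    have hid : ((fun w => Finv w t) ∘ (fun w => F w t)) = id := funext fun w => hinv₁ w t
    rw [hid] at hcomp
    simp only [fderiv_id] at hcomp
    rw [hB, hA, jacMat, jacMat, ← LinearMap.toMatrix_comp _ (EuclideanSpace.basisFun _ ℝ).toBasis]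
    rw [jacMat] at *
    have : (fderiv ℝ (fun w => Finv w t) w₀).toLinearMap.comp
        (fderiv ℝ (fun w => F w t) z₀).toLinearMap = LinearMap.id := by
      rw [← ContinuousLinearMap.toLinearMap_comp, ← hcomp]
      rfl
    rw [this, LinearMap.toMatrix_id]
  have hAB : A * B = 1 := by
    have hcomp : fderiv ℝ ((fun w => F w t) ∘ (fun w => Finv w t)) w₀ =
        (fderiv ℝ (fun w => F w t) (Finv w₀ t)).comp (fderiv ℝ (fun w => Finv w t) w₀) :=
      fderiv_comp w₀ hFd' hBd
    have hid : ((fun w => F w t) ∘ (fun w => Finv w t)) = id := funext fun w => hinv₂ w t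
    rw [hid] at hcomp
    simp only [fderiv_id] at hcomp
    rw [hFinvw₀] at hcomp
    rw [hB, hA, jacMat, jacMat, ← LinearMap.toMatrix_comp _ (EuclideanSpace.basisFun _ ℝ).toBasis]
    have : (fderiv ℝ (fun w => F w t) z₀).toLinearMap.comp
        (fderiv ℝ (fun w => Finv w t) w₀).toLinearMap = LinearMap.id := by
      rw [← ContinuousLinearMap.toLinearMap_comp, ← hcomp]
      rfl
    rw [this, LinearMap.toMatrix_id]
  -- symplectic algebra: A * J = J * Bᵀ
  have hkey : A * Jmat n = Jmat n * Bᵀ := by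
    have h0 : Aᵀ * Jmat n * A = Jmat n := hsymp z₀ t
    have h1 : Aᵀ * Jmat n = Jmat n * B := by
      calc Aᵀ * Jmat n = Aᵀ * Jmat n * (A * B) := by rw [hAB, mul_one]
        _ = (Aᵀ * Jmat n * A) * B := (mul_assoc _ _ _).symm
        _ = Jmat n * B := by rw [h0]
    have h2 : Jmat n * A = Bᵀ * Jmat n := by
      have := congrArg Matrix.transpose h1
      rw [Matrix.transpose_mul, Matrix.transpose_mul, Matrix.transpose_transpose,
        Jmat_transpose] at this
      simpa [Matrix.neg_mul, Matrix.mul_neg, neg_eq_iff_eq_neg] using this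
    calc A * Jmat n = -(-1 : Matrix _ _ ℝ) * A * Jmat n := by simp
      _ = -(Jmat n * Jmat n) * A * Jmat n := by rw [Jmat_mul_Jmat]
      _ = -(Jmat n * (Jmat n * A) * Jmat n) := by noncomm_ring
      _ = -(Jmat n * (Bᵀ * Jmat n) * Jmat n) := by rw [h2]
      _ = -(Jmat n * Bᵀ * (Jmat n * Jmat n)) := by noncomm_ring
      _ = Jmat n * Bᵀ := by rw [Jmat_mul_Jmat]; noncomm_ring
  -- gradient of HK
  set gH : Phase n := gradient (fun w => H w t) w₀ with hgH
  set gK : Phase n := gradient (fun w => K w t) z₀ with hgK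
  set u : Phase n := gH + toPhase (Bᵀ *ᵥ gK) with hu
  have hgrad : gradient (fun w => HK w t) w₀ = u := by
    have hHd : DifferentiableAt ℝ (fun w => H w t) w₀ := by
      have : DifferentiableAt ℝ (fun q : Phase n × ℝ => H q.1 q.2) (w₀, t) :=
        (hH.differentiable one_ne_zero).differentiableAt
      have hp := (differentiableAt_id (x := w₀)).prodMk (differentiableAt_const (𝕜 := ℝ) (x := w₀) t)
      have := this.comp w₀ hp; exact this
    have hKd : DifferentiableAt ℝ (fun w => K w t) z₀ := by
      have : DifferentiableAt ℝ (fun q : Phase n × ℝ => K q.1 q.2) (z₀, t) :=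
        (hK.differentiable one_ne_zero).differentiableAt
      have hp := (differentiableAt_id (x := z₀)).prodMk (differentiableAt_const (𝕜 := ℝ) (x := z₀) t)
      have := this.comp z₀ hp; exact this
    have hHg : HasFDerivAt (fun w => H w t) (InnerProductSpace.toDual ℝ (Phase n) gH) w₀ :=
      hHd.hasGradientAt.hasFDerivAt
    have hKg : HasFDerivAt (fun w => K w t) (InnerProductSpace.toDual ℝ (Phase n) gK) z₀ :=
      hKd.hasGradientAt.hasFDerivAt
    have hKg' : HasFDerivAt (fun w => K w t) (InnerProductSpace.toDual ℝ (Phase n) gK)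
        (Finv w₀ t) := by rw [hFinvw₀]; exact hKg
    have hBf : HasFDerivAt (fun w => Finv w t) (fderiv ℝ (fun w => Finv w t) w₀) w₀ :=
      hBd.hasFDerivAt
    have hcomp : HasFDerivAt (fun w => K (Finv w t) t)
        ((InnerProductSpace.toDual ℝ (Phase n) gK).comp (fderiv ℝ (fun w => Finv w t) w₀)) w₀ := by
      have := hKg'.comp w₀ hBf; exact this
    have hsum : HasFDerivAt (fun w => H w t + K (Finv w t) t)
        (InnerProductSpace.toDual ℝ (Phase n) gH +
          (InnerProductSpace.toDual ℝ (Phase n) gK).comp (fderiv ℝ (fun w => Finv w t) w₀)) w₀ :=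
      hHg.add hcomp
    have hfun : (fun w => HK w t) = fun w => H w t + K (Finv w t) t :=
      funext fun w => hHK w t
    have hLeq : InnerProductSpace.toDual ℝ (Phase n) gH +
        (InnerProductSpace.toDual ℝ (Phase n) gK).comp (fderiv ℝ (fun w => Finv w t) w₀) =
        InnerProductSpace.toDual ℝ (Phase n) u := by
      apply ContinuousLinearMap.ext
      intro v
      have h1 : (fderiv ℝ (fun w => Finv w t) w₀) v = B *ᵥ v := (mulVec_jacMat _ _ _).symm
      simp only [ContinuousLinearMap.add_apply, ContinuousLinearMap.comp_apply, h1,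
        InnerProductSpace.toDual_apply_apply]
      rw [inner_eq_dot, inner_eq_dot, inner_eq_dot]
      rw [h1, Matrix.dotProduct_mulVec, ← Matrix.mulVec_transpose, hu, add_dot]
      rfl
    have : HasGradientAt (fun w => HK w t) u w₀ := by
      rw [hasGradientAt_iff_hasFDerivAt, hfun, ← hLeq]
      exact hsum
    exact this.gradient
  rw [hgrad]
  -- final algebra: Jv u = A g' + Jv gH
  have hfin : Jv u = (fderiv ℝ (fun w => F w t) z₀) g' + Jv gH := by
    have h2 : Jv (toPhase (Bᵀ *ᵥ gK)) =
        (fderiv ℝ (fun w => F w t) z₀) g' := by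
      show WithLp.toLp 2 ((Jmat n) *ᵥ (Bᵀ *ᵥ gK.ofLp)) = _
      rw [Matrix.mulVec_mulVec, ← hkey, ← Matrix.mulVec_mulVec]
      exact congrArg (WithLp.toLp 2) (mulVec_jacMat (fun w => F w t) z₀ g')
    rw [hu, Jv_add, h2]
    exact add_comm _ _
  rw [hfin, ← hsplit]
  exact hcurve

end
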